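/- Let β > 0, 0 < t < 1, and x ∈ ℝ with x ≠ 0, and set z := x/√(1−t). Then ( ∫_t^1 (1−r)^{β−1} (r−t)^{−3/2} exp(−r x²/(2t(r−t))) dr ) / ( ∫_t^1 (1−r)^{β−1} (r−t)^{−1/2} exp(−r x²/(2t(r−t))) dr ) = (1/(1−t)) · g(z), where g(z) := ( ∫_0^∞ u^{β−1} (1+u)^{1/2−β} e^{−z²u/2} du ) / ( ∫_0^∞ u^{β−1} (1+u)^{−1/2−β} e^{−z²u/2} du ), all four integrals being finite. -/

import Mathlib

open MeasureTheory Set Real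

private lemma tricomi_integrable (s c z : ℝ) (hs : -1 < s) (hz : z ≠ 0) :
    IntegrableOn (fun u : ℝ => u ^ s * (1 + u) ^ c * Real.exp (-(z ^ 2 * u) / 2)) (Set.Ioi 0) := by
  have hk : (0:ℝ) < z ^ 2 / 2 := by positivity
  have hmeas : AEStronglyMeasurable (fun u : ℝ => u ^ s * (1 + u) ^ c *
      Real.exp (-(z ^ 2 * u) / 2)) (volume.restrict (Set.Ioi (0:ℝ))) := by
    refine ContinuousOn.aestronglyMeasurable (fun u hu => ?_) measurableSet_Ioi
    have hu0 : (0:ℝ) < u := hu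
    have hv : (0:ℝ) < 1 + u := by linarith
    refine ContinuousAt.continuousWithinAt ?_
    exact ((Real.continuousAt_rpow_const u s (Or.inl hu0.ne')).mul
      ((Real.continuousAt_rpow_const (1 + u) c (Or.inl hv.ne')).comp
        ((continuous_const.add continuous_id).continuousAt))).mul
      (Real.continuous_exp.continuousAt.comp
        (((continuous_const.mul continuous_id).neg.div_const 2).continuousAt))
  have hnorm : ∀ u : ℝ, 0 < u → ‖u ^ s * (1 + u) ^ c * Real.exp (-(z ^ 2 * u) / 2)‖
      = u ^ s * (1 + u) ^ c * Real.exp (-(z ^ 2 * u) / 2) := by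
    intro u hu
    have hv : (0:ℝ) < 1 + u := by linarith
    rw [Real.norm_eq_abs, abs_of_nonneg]
    positivity
  have h1 : IntegrableOn (fun u : ℝ => u ^ s * (1 + u) ^ c * Real.exp (-(z ^ 2 * u) / 2))
      (Set.Ioc (0:ℝ) 1) := by
    have hbase : IntegrableOn (fun u : ℝ => (2:ℝ) ^ |c| * u ^ s) (Set.Ioc (0:ℝ) 1) := by
      refine Integrable.const_mul ?_ _
      have := intervalIntegral.intervalIntegrable_rpow' (a := (0:ℝ)) (b := 1) hs
      rwa [intervalIntegrable_iff_integrableOn_Ioc_of_le zero_le_one] at this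
    refine Integrable.mono' hbase (hmeas.mono_measure
      (Measure.restrict_mono Ioc_subset_Ioi_self le_rfl)) ?_
    refine (ae_restrict_iff' measurableSet_Ioc).2 (Filter.Eventually.of_forall fun u hu => ?_)
    obtain ⟨hu0, hu1⟩ := hu
    have hv : (0:ℝ) < 1 + u := by linarith
    have hb : (1 + u) ^ c ≤ 2 ^ |c| := by
      rcases le_or_gt 0 c with h | h
      · calc (1 + u) ^ c ≤ 2 ^ c := Real.rpow_le_rpow hv.le (by linarith) h
          _ ≤ 2 ^ |c| := Real.rpow_le_rpow_of_exponent_le one_le_two (le_abs_self c)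
      · calc (1 + u) ^ c ≤ 1 := Real.rpow_le_one_of_one_le_of_nonpos (by linarith) h.le
          _ ≤ 2 ^ |c| := Real.one_le_rpow one_le_two (abs_nonneg c)
    have he : Real.exp (-(z ^ 2 * u) / 2) ≤ 1 := by
      rw [Real.exp_le_one_iff]
      have : (0:ℝ) ≤ z ^ 2 * u := by positivity
      linarith
    rw [hnorm u hu0]
    calc u ^ s * (1 + u) ^ c * Real.exp (-(z ^ 2 * u) / 2)
        ≤ u ^ s * (1 + u) ^ c * 1 := by
          have : (0:ℝ) ≤ u ^ s * (1 + u) ^ c := by positivity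
          nlinarith [Real.exp_pos (-(z ^ 2 * u) / 2)]
      _ = u ^ s * (1 + u) ^ c := mul_one _
      _ ≤ u ^ s * 2 ^ |c| := by
          have : (0:ℝ) ≤ u ^ s := by positivity
          nlinarith
      _ = 2 ^ |c| * u ^ s := mul_comm _ _
  have h2 : IntegrableOn (fun u : ℝ => u ^ s * (1 + u) ^ c * Real.exp (-(z ^ 2 * u) / 2))
      (Set.Ioi (1:ℝ)) := by
    have hbase : IntegrableOn (fun u : ℝ => (2:ℝ) ^ |c| *
        (u ^ (s + |c|) * Real.exp (-(z ^ 2 / 2) * u ^ (1:ℝ)))) (Set.Ioi (0:ℝ)) :=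
      (integrableOn_rpow_mul_exp_neg_mul_rpow (by linarith [abs_nonneg c]) zero_lt_one hk).const_mul _
    refine Integrable.mono' (hbase.mono_set (Ioi_subset_Ioi zero_le_one)) (hmeas.mono_measure
      (Measure.restrict_mono (Ioi_subset_Ioi zero_le_one) le_rfl)) ?_
    refine (ae_restrict_iff' measurableSet_Ioi).2 (Filter.Eventually.of_forall fun u hu => ?_)
    have hu1 : (1:ℝ) < u := hu
    have hu0 : (0:ℝ) < u := by linarith
    have hv : (0:ℝ) < 1 + u := by linarith
    rw [hnorm u hu0, Real.rpow_one]
    have he : Real.exp (-(z ^ 2 * u) / 2) = Real.exp (-(z ^ 2 / 2) * u) := by ring_nf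
    rw [he]
    have hb : (1 + u) ^ c ≤ 2 ^ |c| * u ^ |c| := by
      have h2u : (1:ℝ) ≤ u ^ |c| := Real.one_le_rpow hu1.le (abs_nonneg c)
      rcases le_or_gt 0 c with h | h
      · calc (1 + u) ^ c ≤ (2 * u) ^ c := Real.rpow_le_rpow hv.le (by linarith) h
          _ = 2 ^ c * u ^ c := Real.mul_rpow (by norm_num) hu0.le
          _ ≤ 2 ^ |c| * u ^ |c| := by
              have := Real.rpow_le_rpow_of_exponent_le one_le_two (le_abs_self c)
              have := Real.rpow_le_rpow_of_exponent_le hu1.le (le_abs_self c)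
              have h1 : (0:ℝ) < (2:ℝ) ^ c := Real.rpow_pos_of_pos two_pos c
              have h2 : (0:ℝ) < u ^ c := Real.rpow_pos_of_pos hu0 c
              nlinarith
      · calc (1 + u) ^ c ≤ 1 := Real.rpow_le_one_of_one_le_of_nonpos (by linarith) h.le
          _ ≤ 2 ^ |c| * u ^ |c| := by
              have : (1:ℝ) ≤ 2 ^ |c| := Real.one_le_rpow one_le_two (abs_nonneg c)
              nlinarith
    have hus : u ^ s * u ^ |c| = u ^ (s + |c|) := (Real.rpow_add hu0 s |c|).symm
    have hE : (0:ℝ) < Real.exp (-(z ^ 2 / 2) * u) := Real.exp_pos _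
    have hS : (0:ℝ) ≤ u ^ s := (Real.rpow_pos_of_pos hu0 s).le
    calc u ^ s * (1 + u) ^ c * Real.exp (-(z ^ 2 / 2) * u)
        ≤ u ^ s * (2 ^ |c| * u ^ |c|) * Real.exp (-(z ^ 2 / 2) * u) :=
          mul_le_mul_of_nonneg_right (mul_le_mul_of_nonneg_left hb hS) hE.le
      _ = 2 ^ |c| * (u ^ (s + |c|) * Real.exp (-(z ^ 2 / 2) * u)) := by rw [← hus]; ring
  have := h1.union h2
  rwa [Set.Ioc_union_Ioi_eq_Ioi zero_le_one] at this

private lemma key_pt (β t x z a : ℝ) (ht0 : 0 < t) (ht1 : t < 1)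
    (hz : z = x / Real.sqrt (1 - t)) (u : ℝ) (hu : 0 < u) :
    |(-(1 - t) / (1 + u) ^ 2)| *
      ((1 - (t + (1 - t) / (1 + u))) ^ (β - 1) * ((t + (1 - t) / (1 + u)) - t) ^ (-a) *
        Real.exp (-((t + (1 - t) / (1 + u)) * x ^ 2) / (2 * t * ((t + (1 - t) / (1 + u)) - t))))
    = ((1 - t) ^ (β - a) * Real.exp (-x ^ 2 / (2 * t * (1 - t)))) *
      (u ^ (β - 1) * (1 + u) ^ (a - β - 1) * Real.exp (-(z ^ 2 * u) / 2)) := by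
  have h1t : (0:ℝ) < 1 - t := by linarith
  have hv : (0:ℝ) < 1 + u := by linarith
  have hv' : (1 + u) ≠ 0 := hv.ne'
  have h1 : 1 - (t + (1 - t) / (1 + u)) = (1 - t) * u / (1 + u) := by field_simp; ring
  have h2 : (t + (1 - t) / (1 + u)) - t = (1 - t) / (1 + u) := by ring
  have hz2 : z ^ 2 = x ^ 2 / (1 - t) := by
    rw [hz, div_pow, Real.sq_sqrt h1t.le]
  have hexp : -((t + (1 - t) / (1 + u)) * x ^ 2) / (2 * t * ((t + (1 - t) / (1 + u)) - t))
      = -(z ^ 2 * u) / 2 + -x ^ 2 / (2 * t * (1 - t)) := by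
    rw [h2, hz2]
    field_simp
    ring
  rw [hexp, h1, h2, Real.exp_add]
  have habs : |(-(1 - t) / (1 + u) ^ 2)| = (1 - t) / (1 + u) ^ 2 := by
    rw [abs_div, abs_neg, abs_of_pos h1t, abs_of_pos (by positivity)]
  rw [habs]
  have hA : ((1 - t) * u / (1 + u)) ^ (β - 1)
      = (1 - t) ^ (β - 1) * u ^ (β - 1) / (1 + u) ^ (β - 1) := by
    rw [Real.div_rpow (by positivity) hv.le, Real.mul_rpow h1t.le hu.le]
  have hB : ((1 - t) / (1 + u)) ^ (-a) = (1 - t) ^ (-a) / (1 + u) ^ (-a) :=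
    Real.div_rpow h1t.le hv.le (-a)
  have hL : (1 - t) ^ (β - a) = (1 - t) * ((1 - t) ^ (β - 1) * (1 - t) ^ (-a)) := by
    conv_lhs => rw [show β - a = 1 + (β - 1 + -a) by ring, Real.rpow_add h1t,
      Real.rpow_add h1t, Real.rpow_one]
  have h2' : ((1 + u):ℝ) ^ (2:ℕ) = (1 + u) ^ ((2:ℕ):ℝ) := (Real.rpow_natCast _ 2).symm
  have hW : (1 + u) ^ (a - β - 1)
      = (((1 + u):ℝ) ^ (2:ℕ))⁻¹ * ((1 + u) ^ (β - 1))⁻¹ * ((1 + u) ^ (-a))⁻¹ := by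
    rw [h2', ← Real.rpow_neg hv.le, ← Real.rpow_neg hv.le, ← Real.rpow_neg hv.le,
      ← Real.rpow_add hv, ← Real.rpow_add hv]
    congr 1
    push_cast
    ring
  rw [hA, hB, hL, hW]
  have n1 : ((1 + u):ℝ) ^ (β - 1) ≠ 0 := (Real.rpow_pos_of_pos hv _).ne'
  have n2 : ((1 + u):ℝ) ^ (-a) ≠ 0 := (Real.rpow_pos_of_pos hv _).ne'
  field_simp

private lemma phi_image (t : ℝ) (ht0 : 0 < t) (ht1 : t < 1) :
    (fun u : ℝ => t + (1 - t) / (1 + u)) '' Set.Ioi 0 = Set.Ioo t 1 := by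
  have h1t : (0:ℝ) < 1 - t := by linarith
  ext r
  constructor
  · rintro ⟨u, hu, rfl⟩
    have hu0 : (0:ℝ) < u := hu
    have hv : (0:ℝ) < 1 + u := by linarith
    constructor
    · have : (0:ℝ) < (1 - t) / (1 + u) := div_pos h1t hv
      linarith
    · have : (1 - t) / (1 + u) < 1 - t := div_lt_self h1t (by linarith)
      linarith
  · rintro ⟨hr1, hr2⟩
    have hrt : (0:ℝ) < r - t := by linarith
    refine ⟨(1 - r) / (r - t), div_pos (by linarith) hrt, ?_⟩
    have hd : 1 + (1 - r) / (r - t) = (1 - t) / (r - t) := by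
      field_simp
      ring
    show t + (1 - t) / (1 + (1 - r) / (r - t)) = r
    rw [hd, div_div_eq_mul_div, mul_comm, mul_div_assoc, div_self h1t.ne', mul_one]
    ring

private lemma phi_inj (t : ℝ) (ht0 : 0 < t) (ht1 : t < 1) :
    Set.InjOn (fun u : ℝ => t + (1 - t) / (1 + u)) (Set.Ioi 0) := by
  intro u hu v hv h
  have hu0 : (0:ℝ) < u := hu
  have hv0 : (0:ℝ) < v := hv
  have h1t : (0:ℝ) < 1 - t := by linarith
  simp only at h
  have h' : (1 - t) / (1 + u) = (1 - t) / (1 + v) := by linarith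
  rw [div_eq_div_iff (by linarith) (by linarith)] at h'
  have := mul_left_cancel₀ h1t.ne' (by linarith : (1 - t) * (1 + u) = (1 - t) * (1 + v))
  linarith

private lemma phi_deriv (t : ℝ) (ht0 : 0 < t) (ht1 : t < 1) :
    ∀ u ∈ Set.Ioi (0:ℝ), HasDerivWithinAt (fun u : ℝ => t + (1 - t) / (1 + u))
      (-(1 - t) / (1 + u) ^ 2) (Set.Ioi 0) u := by
  intro u hu
  have hu0 : (0:ℝ) < u := hu
  have hv : (1 + u) ≠ 0 := by positivity
  have h1 : HasDerivAt (fun u : ℝ => 1 + u) 1 u := by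
    simpa using (hasDerivAt_id u).const_add 1
  have h2 : HasDerivAt (fun u : ℝ => (1 + u)⁻¹) (-1 / (1 + u) ^ 2) u := h1.inv hv
  have h3 : HasDerivAt (fun u : ℝ => t + (1 - t) * (1 + u)⁻¹)
      ((1 - t) * (-1 / (1 + u) ^ 2)) u := (h2.const_mul (1 - t)).const_add t
  have h4 : (1 - t) * (-1 / (1 + u) ^ 2) = -(1 - t) / (1 + u) ^ 2 := by ring
  rw [h4] at h3
  simpa only [div_eq_mul_inv] using h3.hasDerivWithinAt

/-- under the `B(1/2,β)` prior, the conditional pinning rate has the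
self-similar form `f(t,x) = g(x/√(1−t))/(1−t)` where `g` is the ratio of two
Tricomi-type integrals; all four integrals are finite. -/
theorem beta_prior_pinning_rate_self_similar
    (β t x : ℝ) (hβ : 0 < β) (ht0 : 0 < t) (ht1 : t < 1) (hx : x ≠ 0)
    (z : ℝ) (hz : z = x / Real.sqrt (1 - t)) :
    IntegrableOn (fun r : ℝ => (1 - r) ^ (β - 1) * (r - t) ^ (-(3:ℝ)/2) *
      Real.exp (-(r * x ^ 2) / (2 * t * (r - t)))) (Set.Ioo t 1) ∧
    IntegrableOn (fun r : ℝ => (1 - r) ^ (β - 1) * (r - t) ^ (-(1:ℝ)/2) *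
      Real.exp (-(r * x ^ 2) / (2 * t * (r - t)))) (Set.Ioo t 1) ∧
    IntegrableOn (fun u : ℝ => u ^ (β - 1) * (1 + u) ^ (1/2 - β) *
      Real.exp (-(z ^ 2 * u) / 2)) (Set.Ioi 0) ∧
    IntegrableOn (fun u : ℝ => u ^ (β - 1) * (1 + u) ^ (-(1:ℝ)/2 - β) *
      Real.exp (-(z ^ 2 * u) / 2)) (Set.Ioi 0) ∧
    (∫ r in Set.Ioo t 1, (1 - r) ^ (β - 1) * (r - t) ^ (-(3:ℝ)/2) *
        Real.exp (-(r * x ^ 2) / (2 * t * (r - t)))) /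
      (∫ r in Set.Ioo t 1, (1 - r) ^ (β - 1) * (r - t) ^ (-(1:ℝ)/2) *
        Real.exp (-(r * x ^ 2) / (2 * t * (r - t)))) =
      (1 / (1 - t)) *
        ((∫ u in Set.Ioi (0:ℝ), u ^ (β - 1) * (1 + u) ^ (1/2 - β) *
            Real.exp (-(z ^ 2 * u) / 2)) /
          (∫ u in Set.Ioi (0:ℝ), u ^ (β - 1) * (1 + u) ^ (-(1:ℝ)/2 - β) *
            Real.exp (-(z ^ 2 * u) / 2))) := by
  have h1t : (0:ℝ) < 1 - t := by linarith
  have hzne : z ≠ 0 := by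
    rw [hz]
    exact div_ne_zero hx (by positivity)
  have hβ1 : (-1:ℝ) < β - 1 := by linarith
  have master : ∀ a : ℝ,
      IntegrableOn (fun r : ℝ => (1 - r) ^ (β - 1) * (r - t) ^ (-a) *
        Real.exp (-(r * x ^ 2) / (2 * t * (r - t)))) (Set.Ioo t 1) ∧
      (∫ r in Set.Ioo t 1, (1 - r) ^ (β - 1) * (r - t) ^ (-a) *
          Real.exp (-(r * x ^ 2) / (2 * t * (r - t))))
        = ((1 - t) ^ (β - a) * Real.exp (-x ^ 2 / (2 * t * (1 - t)))) *
          ∫ u in Set.Ioi (0:ℝ), u ^ (β - 1) * (1 + u) ^ (a - β - 1) *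
            Real.exp (-(z ^ 2 * u) / 2) := by
    intro a
    have himg := phi_image t ht0 ht1
    have hinj := phi_inj t ht0 ht1
    have hder := phi_deriv t ht0 ht1
    have hkey : ∀ u ∈ Set.Ioi (0:ℝ),
        |(-(1 - t) / (1 + u) ^ 2)| • ((fun r : ℝ => (1 - r) ^ (β - 1) * (r - t) ^ (-a) *
          Real.exp (-(r * x ^ 2) / (2 * t * (r - t)))) (t + (1 - t) / (1 + u)))
        = ((1 - t) ^ (β - a) * Real.exp (-x ^ 2 / (2 * t * (1 - t)))) *
          (u ^ (β - 1) * (1 + u) ^ (a - β - 1) * Real.exp (-(z ^ 2 * u) / 2)) := by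
      intro u hu
      simp only [smul_eq_mul]
      exact key_pt β t x z a ht0 ht1 hz u hu
    constructor
    · rw [← himg,
        integrableOn_image_iff_integrableOn_abs_deriv_smul measurableSet_Ioi hder hinj]
      refine IntegrableOn.congr_fun
        ((tricomi_integrable (β - 1) (a - β - 1) z hβ1 hzne).const_mul
          ((1 - t) ^ (β - a) * Real.exp (-x ^ 2 / (2 * t * (1 - t)))))
        (fun u hu => (hkey u hu).symm) measurableSet_Ioi
    · rw [← himg, integral_image_eq_integral_abs_deriv_smul measurableSet_Ioi hder hinj,
        ← MeasureTheory.integral_const_mul]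
      exact setIntegral_congr_fun measurableSet_Ioi fun u hu => hkey u hu
  obtain ⟨I3, E3⟩ := master (3/2)
  obtain ⟨I1, E1⟩ := master (1/2)
  rw [show (-(3/2) : ℝ) = -(3:ℝ)/2 by norm_num] at I3 E3
  rw [show (-(1/2) : ℝ) = -(1:ℝ)/2 by norm_num] at I1 E1
  rw [show (3/2 - β - 1 : ℝ) = 1/2 - β by ring] at E3
  rw [show (1/2 - β - 1 : ℝ) = -(1:ℝ)/2 - β by ring] at E1
  refine ⟨I3, I1, tricomi_integrable (β - 1) (1/2 - β) z hβ1 hzne,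
    tricomi_integrable (β - 1) (-(1:ℝ)/2 - β) z hβ1 hzne, ?_⟩
  rw [E3, E1]
  set A := ∫ u in Set.Ioi (0:ℝ), u ^ (β - 1) * (1 + u) ^ (1/2 - β) *
    Real.exp (-(z ^ 2 * u) / 2) with hA
  set B := ∫ u in Set.Ioi (0:ℝ), u ^ (β - 1) * (1 + u) ^ (-(1:ℝ)/2 - β) *
    Real.exp (-(z ^ 2 * u) / 2) with hB
  set E := Real.exp (-x ^ 2 / (2 * t * (1 - t))) with hE
  have hC : (1 - t) ^ (β - 3/2) = (1 - t) ^ (β - 1/2) * (1 / (1 - t)) := by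
    rw [show (β - 3/2 : ℝ) = (β - 1/2) + (-1) by ring, Real.rpow_add h1t,
      Real.rpow_neg_one, one_div]
    norm_num
  have hD : ((1 - t) ^ (β - (1:ℝ)/2) * E) ≠ 0 := by
    have : (0:ℝ) < (1 - t) ^ (β - (1:ℝ)/2) := Real.rpow_pos_of_pos h1t _
    have : (0:ℝ) < E := Real.exp_pos _
    positivity
  have hnum : (1 - t) ^ (β - 3/2) * E * A
      = ((1 - t) ^ (β - (1:ℝ)/2) * E) * ((1 / (1 - t)) * A) := by
    rw [hC]; ring
  have hden : (1 - t) ^ (β - 1/2) * E * B = ((1 - t) ^ (β - (1:ℝ)/2) * E) * B := by ring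
  rw [hnum, hden, mul_div_mul_left _ _ hD, mul_div_assoc]
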